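/- Let k be a field, A an affine integral domain over k, and φ a nontrivial exponential map on A. If there exists x ∈ A with deg_φ(x) = 1, writing φ(x) = x + πU + (higher terms) with leading coefficient π ∈ A^φ, then the localization A_π equals A^φ_π[x], and A_π is isomorphic to a polynomial ring in one variable over A^φ_π. -/

import Mathlib

/-- An exponential map (equivalently, a `𝔾ₐ`-action) on a `k`-algebra `A`:
a `k`-algebra homomorphism `φ : A → A[U]` such that evaluation at `U = 0`
is the identity and the coaction axiom `φ_V ∘ φ_U = φ_{U+V}` holds. -/
structure ExpMap (k A : Type*) [Field k] [CommRing A] [Algebra k A] where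
  toFun : A →ₐ[k] Polynomial A
  eval_zero : ∀ a : A, (toFun a).eval 0 = a
  coaction : ∀ a : A,
    (toFun a).map (toFun.toRingHom) =
      (toFun a).eval₂ (Polynomial.C.comp Polynomial.C)
        (Polynomial.X + Polynomial.C Polynomial.X)

variable {k A : Type*} [Field k] [CommRing A] [Algebra k A]

/-- The ring of invariants `A^φ = {a ∈ A : φ(a) = a}` of an exponential map. -/
def ExpMap.invariants (φ : ExpMap k A) : Subalgebra k A where
  carrier := {a : A | φ.toFun a = Polynomial.C a}
  mul_mem' := by
    intro a b ha hb
    simp only [Set.mem_setOf_eq, map_mul] at *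
    rw [ha, hb]
  add_mem' := by
    intro a b ha hb
    simp only [Set.mem_setOf_eq, map_add] at *
    rw [ha, hb]
  algebraMap_mem' := by
    intro r
    simp only [Set.mem_setOf_eq, AlgHom.commutes, Polynomial.algebraMap_apply]

/-- An exponential map is nontrivial if its ring of invariants is a proper subring. -/
def ExpMap.Nontrivial (φ : ExpMap k A) : Prop := ∃ a : A, φ.toFun a ≠ Polynomial.C a

open Polynomial

lemma ExpMap.coeff_zero (φ : ExpMap k A) (a : A) : (φ.toFun a).coeff 0 = a := by
  rw [coeff_zero_eq_eval_zero]; exact φ.eval_zero a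

lemma ExpMap.toFun_eq (φ : ExpMap k A) (x : A) (hx : (φ.toFun x).natDegree = 1) :
    φ.toFun x = C ((φ.toFun x).coeff 1) * X + C x := by
  conv_lhs => rw [eq_X_add_C_of_natDegree_le_one (le_of_eq hx), φ.coeff_zero]

lemma ExpMap.pc_inv (φ : ExpMap k A) (x : A) (hx : (φ.toFun x).natDegree = 1) :
    φ.toFun ((φ.toFun x).coeff 1) = C ((φ.toFun x).coeff 1) := by
  have h := φ.coaction x
  rw [φ.toFun_eq x hx] at h
  have h1 := congrArg (fun p => p.coeff 1) h
  simpa using h1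

namespace LocalSlice

variable [IsDomain A] (φ : ExpMap k A) (x : A)
variable {L : Type*} [CommRing L] [Algebra A L]

/-- `A → A_π[X]`, the composite of `φ` with coefficientwise localization. -/
noncomputable def g : A →+* Polynomial L :=
  (mapRingHom (algebraMap A L)).comp φ.toFun.toRingHom

omit [IsDomain A] in
lemma g_apply (a : A) : g φ (L := L) a = (φ.toFun a).map (algebraMap A L) := rfl

variable (hx : (φ.toFun x).natDegree = 1) [IsLocalization.Away ((φ.toFun x).coeff 1) L]
include hx

lemma g_unit : IsUnit (g φ (L := L) ((φ.toFun x).coeff 1)) := by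
  rw [g_apply, φ.pc_inv x hx, map_C]
  exact (IsLocalization.Away.algebraMap_isUnit _).map Polynomial.C

/-- The extension of `φ` to the localization `A_π`. -/
noncomputable def phiL : L →+* Polynomial L :=
  IsLocalization.Away.lift ((φ.toFun x).coeff 1) (g_unit φ x hx)

lemma phiL_alg (a : A) : phiL φ x hx (algebraMap A L a) = (φ.toFun a).map (algebraMap A L) :=
  IsLocalization.Away.lift_eq _ _ _

lemma phiL_comp_alg : RingHom.comp (phiL φ x hx (L := L)) (algebraMap A L) = g φ :=
  IsLocalization.lift_comp _

lemma phiL_eval_zero (l : L) : (phiL φ x hx l).eval 0 = l := by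
  have : (evalRingHom 0).comp (phiL φ x hx (L := L)) = RingHom.id _ := by
    apply IsLocalization.ringHom_ext (Submonoid.powers ((φ.toFun x).coeff 1))
    ext a
    simp [phiL_alg, eval_map, eval₂_at_zero, φ.coeff_zero]
  exact RingHom.congr_fun this l

set_option maxHeartbeats 1000000 in
lemma phiL_coaction (l : L) :
    (phiL φ x hx l).map (phiL φ x hx) =
      (phiL φ x hx l).eval₂ ((C : Polynomial L →+* _).comp C) (X + C X) := by
  have : (mapRingHom (phiL φ x hx (L := L))).comp (phiL φ x hx)
      = (eval₂RingHom ((C : Polynomial L →+* _).comp C) (X + C X)).comp (phiL φ x hx) := by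
    apply IsLocalization.ringHom_ext (Submonoid.powers ((φ.toFun x).coeff 1))
    refine RingHom.ext fun a => ?_
    have hc := φ.coaction a
    simp only [RingHom.comp_apply, phiL_alg, coe_mapRingHom, coe_eval₂RingHom]
    rw [map_map, phiL_comp_alg, g, ← map_map, hc, ← coe_mapRingHom, Polynomial.hom_eval₂,
      Polynomial.eval₂_map]
    congr 1
    · refine RingHom.ext fun b => ?_
      simp
    · simp
  exact RingHom.congr_fun this l

/-- `ρ = 1/π` in the localization. -/
noncomputable def rho : L := IsLocalization.Away.invSelf ((φ.toFun x).coeff 1)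

omit hx in
lemma pl_mul_rho : algebraMap A L ((φ.toFun x).coeff 1) * rho φ x = 1 := by
  unfold rho; exact IsLocalization.Away.mul_invSelf _

/-- The substitution `U ↦ (X - x)/π`. -/
noncomputable def u : Polynomial L := (X - C (algebraMap A L x)) * C (rho φ x)

/-- The substitution `X ↦ x + π U`. -/
noncomputable def w : Polynomial L :=
  C (algebraMap A L x) + C (algebraMap A L ((φ.toFun x).coeff 1)) * X

omit hx in
lemma u_comp_w : (u φ x (L := L)).comp (w φ x) = X := by
  have h := pl_mul_rho φ x (L := L)
  simp only [u, w, mul_comp, sub_comp, C_comp, X_comp]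
  ring_nf
  rw [mul_right_comm, ← map_mul, h, map_one, one_mul]

/-- `Θ : A_π → A_π[X]`, `a ↦ φ(a)|_{U := (X-x)/π}`. -/
noncomputable def theta : L →+* Polynomial L :=
  (eval₂RingHom C (u φ x)).comp (phiL φ x hx)

lemma theta_apply (l : L) : theta φ x hx l = (phiL φ x hx l).comp (u φ x) := rfl

lemma theta_comp_w (l : L) : (theta φ x hx l).comp (w φ x) = phiL φ x hx l := by
  rw [theta_apply, comp_assoc, u_comp_w, comp_X]

lemma eval_theta (l : L) : (theta φ x hx l).eval (algebraMap A L x) = l := by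
  rw [theta_apply, eval_comp]
  have h : (u φ x (L := L)).eval (algebraMap A L x) = 0 := by simp [u]
  rw [h, phiL_eval_zero]

lemma phiL_xL : phiL φ x hx (algebraMap A L x) =
    C (algebraMap A L ((φ.toFun x).coeff 1)) * X + C (algebraMap A L x) := by
  rw [phiL_alg]
  conv_lhs => rw [φ.toFun_eq x hx]
  simp

lemma phiL_pL : phiL φ x hx (algebraMap A L ((φ.toFun x).coeff 1)) =
    C (algebraMap A L ((φ.toFun x).coeff 1)) := by
  rw [phiL_alg, φ.pc_inv x hx, map_C]

omit hx in
lemma eval₂_CC (p : Polynomial L) (s : Polynomial (Polynomial L)) :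
    eval₂ ((C : Polynomial L →+* _).comp C) s p = (map C p).comp s := by
  rw [Polynomial.comp, eval₂_map]

set_option maxHeartbeats 1000000 in
lemma map_theta_eq (l : L) :
    (theta φ x hx l).map (phiL φ x hx) = (theta φ x hx l).map (C : L →+* Polynomial L) := by
  set pL : L := algebraMap A L ((φ.toFun x).coeff 1) with hpL
  set xL : L := algebraMap A L x with hxL
  set ρ : L := rho φ x with hρ
  set q : Polynomial L := theta φ x hx l with hq
  set t : Polynomial (Polynomial L) := C (C xL) + C (C pL) * (X + C X) with ht
  set t2 : Polynomial (Polynomial L) :=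
    C (C ρ) * (X - C (C xL) - C (C pL) * C X) with ht2
  have hpr : C (C pL) * C (C ρ) = (1 : Polynomial (Polynomial L)) := by
    rw [← map_mul, ← map_mul, pl_mul_rho φ x, map_one, map_one]
  have htt2 : t.comp t2 = X := by
    simp only [ht, ht2, add_comp, mul_comp, C_comp, X_comp]
    linear_combination (X - C (C xL) - C (C pL) * (C X : Polynomial (Polynomial L))) * hpr
  -- the two key computations about `w`
  have hw1 : (map (C : L →+* Polynomial L) (w φ x)).comp (X + C X) = t := by
    simp only [w, Polynomial.map_add, Polynomial.map_mul, map_C, map_X, add_comp, mul_comp,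
      C_comp, X_comp, ht]
    rfl
  have hw2 : map (phiL φ x hx) (w φ x) = t := by
    simp only [w, Polynomial.map_add, Polynomial.map_mul, map_C, map_X, phiL_xL, phiL_pL, ht]
    rw [map_add, map_mul]
    ring
  -- main identity
  have e1 : phiL φ x hx l = q.comp (w φ x) := (theta_comp_w φ x hx l).symm
  have e2 : (map (phiL φ x hx) q).comp t = (map C q).comp t := by
    have h3 := congrArg (Polynomial.map (phiL φ x hx)) e1
    rw [Polynomial.map_comp, hw2, phiL_coaction φ x hx l, e1, eval₂_CC, Polynomial.map_comp,
      comp_assoc, hw1] at h3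
    exact h3.symm
  have h4 := congrArg (fun r => r.comp t2) e2
  simpa only [comp_assoc, htt2, comp_X] using h4

lemma phiL_theta_coeff (l : L) (j : ℕ) :
    phiL φ x hx ((theta φ x hx l).coeff j) = C ((theta φ x hx l).coeff j) := by
  have h := congrArg (fun p => p.coeff j) (map_theta_eq φ x hx l)
  simpa only [coeff_map] using h

/-- `π` as an element of the ring of invariants. -/
noncomputable abbrev pcB : φ.invariants := ⟨(φ.toFun x).coeff 1, φ.pc_inv x hx⟩

variable {L' : Type*} [CommRing L'] [Algebra φ.invariants L']
  [IsLocalization.Away (pcB φ x hx) L']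

/-- The natural map `A^φ → A_π`. -/
noncomputable def gB : φ.invariants →+* L :=
  (algebraMap A L).comp (φ.invariants.val.toRingHom)

lemma gB_unit : IsUnit (gB φ (L := L) (pcB φ x hx)) :=
  IsLocalization.Away.algebraMap_isUnit ((φ.toFun x).coeff 1)

/-- The natural map `(A^φ)_π → A_π`. -/
noncomputable def fB : L' →+* L :=
  IsLocalization.Away.lift (pcB φ x hx) (gB_unit φ x hx)

lemma fB_alg (b : φ.invariants) :
    fB φ x hx (L := L) (L' := L') (algebraMap φ.invariants L' b) = algebraMap A L b :=
  IsLocalization.Away.lift_eq _ _ _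

lemma pc_ne_zero : ((φ.toFun x).coeff 1) ≠ 0 := by
  intro h
  have h2 : φ.toFun x = C x := by
    rw [φ.toFun_eq x hx, h, map_zero, zero_mul, zero_add]
  rw [h2] at hx
  simp at hx

lemma algebraMap_inj : Function.Injective (algebraMap A L) := by
  apply IsLocalization.injective (M := Submonoid.powers ((φ.toFun x).coeff 1))
  apply Submonoid.powers_le.mpr
  exact mem_nonZeroDivisors_of_ne_zero (pc_ne_zero φ x hx)

lemma phiL_fB (l' : L') : phiL φ x hx (fB φ x hx (L := L) l') = C (fB φ x hx (L := L) l') := by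
  have h : (phiL φ x hx (L := L)).comp (fB φ x hx (L' := L')) =
      (C : L →+* Polynomial L).comp (fB φ x hx (L' := L')) := by
    apply IsLocalization.ringHom_ext (Submonoid.powers (pcB φ x hx))
    refine RingHom.ext fun b => ?_
    simp only [RingHom.comp_apply, fB_alg, phiL_alg]
    rw [show φ.toFun (b : A) = C (b : A) from b.2, map_C]
  exact RingHom.congr_fun h l'

lemma inv_mem_range (l : L) (hl : phiL φ x hx l = C l) :
    l ∈ Set.range (fB φ x hx (L := L) (L' := L')) := by
  obtain ⟨n, a, hn⟩ := IsLocalization.Away.surj (S := L) ((φ.toFun x).coeff 1) l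
  have hpLn : phiL φ x hx ((algebraMap A L) ((φ.toFun x).coeff 1) ^ n) =
      C ((algebraMap A L) ((φ.toFun x).coeff 1) ^ n) := by
    rw [map_pow, phiL_pL, ← map_pow]
  have ha : phiL φ x hx (algebraMap A L a) = C (algebraMap A L a) := by
    rw [← hn, map_mul, hl, hpLn, ← map_mul]
  have haA : a ∈ φ.invariants := by
    rw [phiL_alg] at ha
    have : (φ.toFun a).map (algebraMap A L) = (C a).map (algebraMap A L) := by
      rwa [map_C]
    exact Polynomial.map_injective _ (algebraMap_inj φ x hx) this
  have hmem : pcB φ x hx ^ n ∈ Submonoid.powers (pcB φ x hx) := ⟨n, rfl⟩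
  refine ⟨IsLocalization.mk' L' (⟨a, haA⟩ : φ.invariants) ⟨pcB φ x hx ^ n, hmem⟩, ?_⟩
  have hu : IsUnit ((algebraMap A L) ((φ.toFun x).coeff 1) ^ n) :=
    IsLocalization.Away.algebraMap_pow_isUnit _ n
  apply hu.mul_right_cancel
  rw [hn]
  have hms := IsLocalization.mk'_spec L' (⟨a, haA⟩ : φ.invariants) ⟨pcB φ x hx ^ n, hmem⟩
  have h5 := congrArg (fB φ x hx (L := L)) hms
  rw [map_mul, fB_alg, fB_alg] at h5
  simpa [pcB, map_pow] using h5

/-- The evaluation map `(A^φ)_π[X] → A_π`, `X ↦ x`. -/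
noncomputable def F : Polynomial L' →+* L :=
  eval₂RingHom (fB φ x hx (L := L)) (algebraMap A L x)

lemma F_C (l' : L') : F φ x hx (L := L) (C l') = fB φ x hx (L := L) l' := eval₂_C _ _

lemma F_X : F φ x hx (L := L) (L' := L') X = algebraMap A L x := eval₂_X _ _

lemma theta_xL : theta φ x hx (algebraMap A L x) = (X : Polynomial L) := by
  have hpr : C ((algebraMap A L) ((φ.toFun x).coeff 1)) * C (rho φ x) = (1 : Polynomial L) := by
    rw [← map_mul, pl_mul_rho φ x, map_one]
  rw [theta_apply, phiL_xL, add_comp, mul_comp, C_comp, C_comp, X_comp, u]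
  linear_combination (X - C ((algebraMap A L) x)) * hpr

lemma theta_F (p : Polynomial L') :
    theta φ x hx (F φ x hx (L := L) p) = p.map (fB φ x hx (L := L)) := by
  have h : (theta φ x hx (L := L)).comp (F φ x hx (L' := L')) =
      mapRingHom (fB φ x hx (L := L) (L' := L')) := by
    apply ringHom_ext
    · intro l'
      simp only [RingHom.comp_apply, F_C, coe_mapRingHom, map_C]
      rw [theta_apply, phiL_fB, C_comp]
    · simp only [RingHom.comp_apply, F_X, coe_mapRingHom, map_X]
      exact theta_xL φ x hx
  exact RingHom.congr_fun h p

lemma fB_inj : Function.Injective (fB φ x hx (L := L) (L' := L')) := by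
  rw [fB, IsLocalization.Away.lift, IsLocalization.lift_injective_iff]
  intro a b
  constructor
  · intro h
    obtain ⟨c, hc⟩ := IsLocalization.exists_of_eq (M := Submonoid.powers (pcB φ x hx)) h
    have hcu : IsUnit (gB φ (L := L) (c : φ.invariants)) := by
      obtain ⟨n, hn⟩ := c.2
      rw [← hn, map_pow]
      exact (gB_unit φ x hx).pow n
    apply hcu.mul_left_cancel
    rw [← map_mul, ← map_mul, hc]
  · intro h
    have h' : algebraMap A L (a : A) = algebraMap A L (b : A) := h
    have h2 : (a : A) = (b : A) := algebraMap_inj φ x hx h'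
    exact congrArg _ (Subtype.ext h2)

lemma F_inj : Function.Injective (F φ x hx (L := L) (L' := L')) := by
  intro p q h
  have h2 : p.map (fB φ x hx (L := L)) = q.map (fB φ x hx (L := L)) := by
    rw [← theta_F, ← theta_F, h]
  exact Polynomial.map_injective _ (fB_inj φ x hx) h2

lemma F_surj : Function.Surjective (F φ x hx (L := L) (L' := L')) := by
  intro l
  have hc : ∀ n : ℕ, (theta φ x hx l).coeff n ∈ Set.range (fB φ x hx (L := L) (L' := L')) := by
    intro n
    exact inv_mem_range φ x hx _ (phiL_theta_coeff φ x hx l n)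
  obtain ⟨p, hp⟩ := (Polynomial.mem_lifts _).mp
    ((Polynomial.lifts_iff_coeff_lifts _).mpr hc)
  refine ⟨p, ?_⟩
  have : F φ x hx (L := L) p = (p.map (fB φ x hx (L := L))).eval (algebraMap A L x) := by
    rw [eval_map]; rfl
  rw [this, hp, eval_theta]

variable [Algebra k L] [IsScalarTower k A L] [Algebra k L']
  [IsScalarTower k φ.invariants L']

/-- `F` as a `k`-algebra homomorphism. -/
noncomputable def FAlg : Polynomial L' →ₐ[k] L :=
  { F φ x hx (L := L) (L' := L') with
    commutes' := by
      intro c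
      have h1 : algebraMap k (Polynomial L') c = C (algebraMap k L' c) := by
        rw [Polynomial.algebraMap_apply]
      rw [RingHom.toMonoidHom_eq_coe, OneHom.toFun_eq_coe, MonoidHom.toOneHom_coe,
        MonoidHom.coe_coe, h1, F_C, IsScalarTower.algebraMap_apply k φ.invariants L', fB_alg]
      rw [IsScalarTower.algebraMap_apply k A L]
      norm_num }

/-- The main isomorphism `(A^φ)_π[X] ≃ A_π`. -/
noncomputable def FEquiv : Polynomial L' ≃ₐ[k] L :=
  AlgEquiv.ofBijective (FAlg φ x hx) ⟨F_inj φ x hx, F_surj φ x hx⟩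

lemma FEquiv_X : FEquiv φ x hx (L := L) (L' := L') X = algebraMap A L x := F_X φ x hx

lemma FEquiv_C (b : φ.invariants) :
    FEquiv φ x hx (L := L) (C (algebraMap φ.invariants L' b)) = algebraMap A L (b : A) := by
  have h : FEquiv φ x hx (L := L) (C (algebraMap φ.invariants L' b)) =
      fB φ x hx (L := L) (algebraMap φ.invariants L' b) := F_C φ x hx _
  rw [h, fB_alg]

end LocalSlice

set_option synthInstance.maxHeartbeats 1000000 in
theorem local_slice [IsDomain A] [Algebra.FiniteType k A] (φ : ExpMap k A)
    (hφ : φ.Nontrivial) (x : A) (hx : (φ.toFun x).natDegree = 1) :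
    ∃ hπ : (φ.toFun x).coeff 1 ∈ φ.invariants,
      ∃ e : Polynomial (Localization.Away (⟨(φ.toFun x).coeff 1, hπ⟩ : φ.invariants))
          ≃ₐ[k] Localization.Away ((φ.toFun x).coeff 1),
        e Polynomial.X = algebraMap A (Localization.Away ((φ.toFun x).coeff 1)) x ∧
        ∀ b : φ.invariants,
          e (Polynomial.C (algebraMap φ.invariants
              (Localization.Away (⟨(φ.toFun x).coeff 1, hπ⟩ : φ.invariants)) b)) =
            algebraMap A (Localization.Away ((φ.toFun x).coeff 1)) (b : A) := by
  refine ⟨φ.pc_inv x hx, LocalSlice.FEquiv φ x hx, LocalSlice.FEquiv_X φ x hx,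
    fun b => LocalSlice.FEquiv_C φ x hx b⟩
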